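/- Let g : ℝ → ℝ be increasing, n̄ > 0, and M a geometric random variable on {1, 2, ...} with parameter p₀ ∈ (0,1). Define G(x) = E[g(n̄ + x + M·n̄)]. Then E[ ∫₀^{M n̄} ( g(n̄ + t) − G(0) ) dt ] ≤ 0. -/

import Mathlib

/-- For `g` increasing, `nbar > 0`, `M` geometric on `{1,2,...}` with
parameter `p₀ ∈ (0,1)`, and `G(0) = E[g(nbar + M nbar)]`, we have
`E[∫₀^{M nbar} (g(nbar + t) − G(0)) dt] ≤ 0`. -/
theorem stmt7 (g : ℝ → ℝ) (hg : Monotone g) (nbar p₀ : ℝ) (hn : 0 < nbar)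
    (hp : p₀ ∈ Set.Ioo (0 : ℝ) 1)
    (G0 : ℝ) (hG0 : G0 = ∑' m : ℕ, (1 - p₀) ^ m * p₀ * g (nbar + (m + 1) * nbar))
    (hG0sum : Summable (fun m : ℕ => (1 - p₀) ^ m * p₀ * g (nbar + (m + 1) * nbar)))
    (hsum : Summable (fun m : ℕ =>
      (1 - p₀) ^ m * p₀ * ∫ t in (0 : ℝ)..((m + 1) * nbar), (g (nbar + t) - G0))) :
    ∑' m : ℕ, (1 - p₀) ^ m * p₀ * ∫ t in (0 : ℝ)..((m + 1) * nbar), (g (nbar + t) - G0) ≤ 0 := by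
  obtain ⟨hp0, hp1⟩ := hp
  set q : ℝ := 1 - p₀ with hq_def
  have hq0 : 0 ≤ q := by simp [hq_def]; linarith
  have hq1 : q < 1 := by simp [hq_def]; linarith
  set a : ℕ → ℝ := fun k => g (nbar + (k + 1) * nbar) with ha_def
  set c : ℕ → ℝ := fun k => a k - G0 with hc_def
  set d : ℕ → ℝ := fun k => q ^ k * c k with hd_def
  have hgeo : Summable (fun k : ℕ => q ^ k) := summable_geometric_of_lt_one hq0 hq1
  have htgeo : ∑' k : ℕ, q ^ k = p₀⁻¹ := by
    rw [tsum_geometric_of_lt_one hq0 hq1]; simp [hq_def]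
  -- Summable (q^m * a m)
  have hda : Summable (fun m : ℕ => q ^ m * a m) := by
    have := hG0sum.mul_right p₀⁻¹
    refine this.congr fun m => ?_
    field_simp [ha_def]
    simp only [ha_def]; ring_nf
  have hd : Summable d := by
    have := hda.sub (hgeo.mul_right G0)
    refine this.congr fun k => ?_
    simp [hd_def, hc_def]; ring
  -- absolute summability of d
  have hmono_a : ∀ k : ℕ, a 0 ≤ a k := by
    intro k
    apply hg
    have h1 : (0 : ℝ) ≤ (k : ℝ) := Nat.cast_nonneg k
    push_cast
    nlinarith
  have hnd : Summable (fun k : ℕ => ‖d k‖) := by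
    set L : ℝ := a 0 - G0 with hL_def
    have he : Summable (fun k : ℕ => d k - q ^ k * L) := hd.sub (hgeo.mul_right L)
    have henn : ∀ k : ℕ, 0 ≤ d k - q ^ k * L := by
      intro k
      have h1 : L ≤ c k := by simp [hc_def, hL_def]; linarith [hmono_a k]
      have := mul_le_mul_of_nonneg_left h1 (pow_nonneg hq0 k)
      simp only [hd_def]; linarith
    refine Summable.of_nonneg_of_le (fun k => norm_nonneg _) (fun k => ?_)
      (he.add (hgeo.mul_right |L|))
    have h3 : q ^ k * L ≤ q ^ k * |L| := mul_le_mul_of_nonneg_left (le_abs_self L) (pow_nonneg hq0 k)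
    have h4 : -(q ^ k * |L|) ≤ q ^ k * L := by
      have := neg_abs_le L
      nlinarith [pow_nonneg hq0 k]
    rw [Real.norm_eq_abs]
    rcases abs_cases (d k) with ⟨h, _⟩ | ⟨h, _⟩
    · linarith [henn k, h3]
    · linarith [henn k, h4]
  -- tsum d = 0
  have htd : ∑' k, d k = 0 := by
    have h1 : ∑' m : ℕ, q ^ m * a m = G0 * p₀⁻¹ := by
      have : G0 = p₀ * ∑' m : ℕ, q ^ m * a m := by
        rw [hG0, ← tsum_mul_left]
        exact tsum_congr fun m => by ring
      rw [this]; field_simp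
    have : ∑' k, d k = (∑' m : ℕ, q ^ m * a m) - ∑' k : ℕ, q ^ k * G0 := by
      rw [← Summable.tsum_sub hda (hgeo.mul_right G0)]
      exact tsum_congr fun k => by simp [hd_def, hc_def]; ring
    rw [this, h1, tsum_mul_right, htgeo]; ring
  -- geometric norm summable
  have hngeo : Summable (fun k : ℕ => ‖(q : ℝ) ^ k‖) := by
    refine hgeo.congr fun k => ?_
    rw [Real.norm_eq_abs, abs_of_nonneg (pow_nonneg hq0 k)]
  -- Cauchy product
  have hcs : Summable (fun n : ℕ => ∑ k ∈ Finset.range (n + 1), d k * q ^ (n - k)) :=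
    (summable_norm_sum_mul_range_of_summable_norm hnd hngeo).of_norm
  have htcs : ∑' n : ℕ, ∑ k ∈ Finset.range (n + 1), d k * q ^ (n - k) = 0 := by
    rw [← tsum_mul_tsum_eq_tsum_sum_range_of_summable_norm hnd hngeo, htd, zero_mul]
  -- key identity: Cauchy term = q^n * ∑_{k ≤ n} c k
  have hkey : ∀ n : ℕ, ∑ k ∈ Finset.range (n + 1), d k * q ^ (n - k)
      = q ^ n * ∑ k ∈ Finset.range (n + 1), c k := by
    intro n
    rw [Finset.mul_sum]
    refine Finset.sum_congr rfl fun k hk => ?_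
    have hk' : k ≤ n := Nat.lt_succ_iff.mp (Finset.mem_range.mp hk)
    rw [hd_def]
    have : q ^ k * q ^ (n - k) = q ^ n := by
      rw [← pow_add, Nat.add_sub_cancel' hk']
    calc q ^ k * c k * q ^ (n - k) = (q ^ k * q ^ (n - k)) * c k := by ring
      _ = q ^ n * c k := by rw [this]
  -- monotone integrand
  set f : ℝ → ℝ := fun t => g (nbar + t) - G0 with hf_def
  have hf_mono : Monotone f := fun x y h => sub_le_sub_right (hg (by linarith)) _
  have hint : ∀ (u v : ℝ), IntervalIntegrable f MeasureTheory.volume u v :=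
    fun u v => (hf_mono.monotoneOn _).intervalIntegrable
  -- integral bound
  have hIbound : ∀ m : ℕ, (∫ t in (0 : ℝ)..((m + 1) * nbar), f t)
      ≤ ∑ k ∈ Finset.range (m + 1), nbar * c k := by
    intro m
    have hsplit : ∑ k ∈ Finset.range (m + 1), ∫ t in ((k : ℝ) * nbar)..(((k : ℕ) + 1 : ℕ) * nbar), f t
        = ∫ t in (((0 : ℕ) : ℝ) * nbar)..(((m + 1 : ℕ) : ℝ) * nbar), f t := by
      exact intervalIntegral.sum_integral_adjacent_intervals
        (a := fun i : ℕ => (i : ℝ) * nbar) (fun k _ => hint _ _)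
    have hcast : (∫ t in (0 : ℝ)..((m : ℝ) + 1) * nbar, f t)
        = ∫ t in (((0 : ℕ) : ℝ) * nbar)..(((m + 1 : ℕ) : ℝ) * nbar), f t := by
      norm_num
    rw [hcast, ← hsplit]
    refine Finset.sum_le_sum fun k _ => ?_
    have hab : (k : ℝ) * nbar ≤ ((k : ℕ) + 1 : ℕ) * nbar := by
      push_cast
      nlinarith [Nat.cast_nonneg (α := ℝ) k]
    have hle : ∀ x ∈ Set.Icc ((k : ℝ) * nbar) (((k : ℕ) + 1 : ℕ) * nbar), f x ≤ c k := by
      intro x hx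
      have : nbar + x ≤ nbar + ((k : ℝ) + 1) * nbar := by
        have := hx.2; push_cast at this; linarith
      exact sub_le_sub_right (hg this) _
    calc (∫ t in ((k : ℝ) * nbar)..(((k : ℕ) + 1 : ℕ) * nbar), f t)
        ≤ ∫ _ in ((k : ℝ) * nbar)..(((k : ℕ) + 1 : ℕ) * nbar), c k :=
          intervalIntegral.integral_mono_on hab (hint _ _) intervalIntegrable_const hle
      _ = nbar * c k := by
          rw [intervalIntegral.integral_const, smul_eq_mul]
          push_cast
          ring
  -- upper bound function
  have hub : ∀ m : ℕ, q ^ m * p₀ * ∫ t in (0 : ℝ)..((m + 1) * nbar), (g (nbar + t) - G0)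
      ≤ p₀ * nbar * ∑ k ∈ Finset.range (m + 1), d k * q ^ (m - k) := by
    intro m
    rw [hkey m]
    have h1 := hIbound m
    have h2 : 0 ≤ q ^ m * p₀ := mul_nonneg (pow_nonneg hq0 m) hp0.le
    calc q ^ m * p₀ * ∫ t in (0 : ℝ)..((m + 1) * nbar), (g (nbar + t) - G0)
        ≤ q ^ m * p₀ * ∑ k ∈ Finset.range (m + 1), nbar * c k := by
          exact mul_le_mul_of_nonneg_left h1 h2
      _ = p₀ * nbar * (q ^ m * ∑ k ∈ Finset.range (m + 1), c k) := by
          rw [Finset.mul_sum, Finset.mul_sum, Finset.mul_sum]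
          exact Finset.sum_congr rfl fun k _ => by ring
  have hubsum : Summable (fun m : ℕ =>
      p₀ * nbar * ∑ k ∈ Finset.range (m + 1), d k * q ^ (m - k)) := hcs.mul_left _
  calc ∑' m : ℕ, q ^ m * p₀ * ∫ t in (0 : ℝ)..((m + 1) * nbar), (g (nbar + t) - G0)
      ≤ ∑' m : ℕ, p₀ * nbar * ∑ k ∈ Finset.range (m + 1), d k * q ^ (m - k) :=
        Summable.tsum_le_tsum hub hsum hubsum
    _ = p₀ * nbar * ∑' m : ℕ, ∑ k ∈ Finset.range (m + 1), d k * q ^ (m - k) := tsum_mul_left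
    _ = 0 := by rw [htcs, mul_zero]
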